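/- Suppose f: ℝ^d → ℝ satisfies |D^a f(x)| ≤ C exp(M‖x‖²) for all multi-indices a with |a| ≤ d with growth rate M ≥ 0, and X is an ℝ^d-valued random vector with P(‖X‖ > t) ≤ C' t^η exp(-α t²) for t > t₀, with α > 0. Let p ≥ 1 with M < α/p and let P_r be the radial projection with ‖P_r(x)‖ ≤ ‖x‖, P_r(x) = x on ‖x‖ ≤ (1-δ)r. Then E|f(P_r(X)) - f(X)|^p ≤ C'' r^η exp(-p(α/p - M)(1-δ)² r²) for all sufficiently large r. -/

import Mathlib

set_option maxHeartbeats 1000000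


open MeasureTheory Real

/-- Auxiliary summability: `(k+1)^m * q^k` is summable for `0 ≤ q < 1`. -/
lemma aux_summable_shift (m : ℕ) {q : ℝ} (hq0 : 0 < q) (hq1 : q < 1) :
    Summable (fun k : ℕ => ((k : ℝ) + 1) ^ m * q ^ k) := by
  have h1 : Summable (fun n : ℕ => (n : ℝ) ^ m * q ^ n) :=
    summable_pow_mul_geometric_of_norm_lt_one m
      (by rw [Real.norm_eq_abs, abs_of_pos hq0]; exact hq1)
  have h2 : Summable (fun k : ℕ => ((k + 1 : ℕ) : ℝ) ^ m * q ^ (k + 1)) :=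
    h1.comp_injective (add_left_injective 1)
  have h3 : Summable (fun k : ℕ => (((k + 1 : ℕ) : ℝ) ^ m * q ^ (k + 1)) * q⁻¹) :=
    h2.mul_right _
  refine h3.congr fun k => ?_
  push_cast
  field_simp
  ring

theorem projection_error_moment_bound (d : ℕ) (hd : 0 < d)
    {Ω : Type*} [MeasurableSpace Ω] (P : Measure Ω) [IsProbabilityMeasure P]
    (f : EuclideanSpace ℝ (Fin d) → ℝ)
    (C M : ℝ) (hC : 0 < C) (hM0 : 0 ≤ M)
    (hf : ∀ n : ℕ, n ≤ d → ∀ x : EuclideanSpace ℝ (Fin d),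
      ‖iteratedFDeriv ℝ n f x‖ ≤ C * Real.exp (M * ‖x‖ ^ 2))
    (X : Ω → EuclideanSpace ℝ (Fin d)) (hX : Measurable X)
    (C' t₀ α η : ℝ) (hC' : 0 < C') (ht₀ : 0 < t₀) (hα : 0 < α)
    (htail : ∀ t > t₀, P {ω | ‖X ω‖ > t} ≤ ENNReal.ofReal (C' * t ^ η * Real.exp (-α * t ^ 2)))
    (p : ℝ) (hp : 1 ≤ p) (hMα : M < α / p)
    (δ : ℝ) (hδ1 : 0 < δ) (hδ2 : δ < 1/2)
    (Pr : ℝ → EuclideanSpace ℝ (Fin d) → EuclideanSpace ℝ (Fin d))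
    (hPr1 : ∀ r x, ‖Pr r x‖ ≤ ‖x‖)
    (hPr2 : ∀ r x, ‖x‖ ≤ (1 - δ) * r → Pr r x = x) :
    ∃ C'' > 0, ∃ r₀ : ℝ, ∀ r > r₀,
      ∫⁻ ω, ENNReal.ofReal (|f (Pr r (X ω)) - f (X ω)| ^ p) ∂P ≤
        ENNReal.ofReal
          (C'' * r ^ η * Real.exp (-p * (α / p - M) * (1 - δ) ^ 2 * r ^ 2)) := by
  have hp0 : (0 : ℝ) < p := lt_of_lt_of_le one_pos hp
  have hγ : 0 < α - p * M := by
    have h := (lt_div_iff₀ hp0).mp hMα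
    nlinarith
  set γ : ℝ := α - p * M with hγdef
  set m : ℕ := ⌈|η|⌉₊ with hm
  set q : ℝ := Real.exp (-γ) with hqdef
  have hq0 : 0 < q := Real.exp_pos _
  have hq1 : q < 1 := Real.exp_lt_one_iff.mpr (by linarith)
  set S : ℝ := ∑' k : ℕ, ((k : ℝ) + 1) ^ m * q ^ k with hSdef
  have hSsum : Summable (fun k : ℕ => ((k : ℝ) + 1) ^ m * q ^ k) :=
    aux_summable_shift m hq0 hq1
  have hS0 : 0 ≤ S := tsum_nonneg fun k => by positivity
  have h1δ : 0 < 1 - δ := by linarith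
  set D : ℝ := (2 * C) ^ p * C' * Real.exp (p * M) with hDdef
  have hD0 : 0 < D := by
    have : (0 : ℝ) < (2 * C) ^ p := Real.rpow_pos_of_pos (by linarith) p
    positivity
  refine ⟨D * (S + 1) * (1 - δ) ^ η, by
    have : (0 : ℝ) < (1 - δ) ^ η := Real.rpow_pos_of_pos h1δ η
    positivity, 2 * t₀ + 2, fun r hr => ?_⟩
  have hr0 : 0 < r := by linarith
  set R : ℝ := (1 - δ) * r with hRdef
  have hhalf : r / 2 ≤ R := by nlinarith
  have hRt₀ : t₀ < R := by linarith
  have hR1 : 1 ≤ R := by linarith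
  have hR0 : 0 < R := by linarith
  -- pointwise bound on f
  have hfx : ∀ y, |f y| ≤ C * Real.exp (M * ‖y‖ ^ 2) := by
    intro y
    have h := hf 0 (Nat.zero_le d) y
    rwa [norm_iteratedFDeriv_zero, Real.norm_eq_abs] at h
  have key : ∀ (x : EuclideanSpace ℝ (Fin d)) (B : ℝ), ‖x‖ ^ 2 ≤ B →
      |f (Pr r x) - f x| ^ p ≤ (2 * C) ^ p * Real.exp (M * B * p) := by
    intro x B hB
    have hPx : ‖Pr r x‖ ^ 2 ≤ B :=
      le_trans (pow_le_pow_left₀ (norm_nonneg _) (hPr1 r x) 2) hB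
    have hmono : ∀ y : EuclideanSpace ℝ (Fin d), ‖y‖ ^ 2 ≤ B →
        |f y| ≤ C * Real.exp (M * B) := by
      intro y hy
      refine (hfx y).trans ?_
      have : M * ‖y‖ ^ 2 ≤ M * B := mul_le_mul_of_nonneg_left hy hM0
      exact mul_le_mul_of_nonneg_left (Real.exp_le_exp.mpr this) hC.le
    have h1 : |f (Pr r x) - f x| ≤ 2 * C * Real.exp (M * B) := by
      have := hmono _ hPx
      have := hmono _ hB
      calc |f (Pr r x) - f x| ≤ |f (Pr r x)| + |f x| := abs_sub _ _
        _ ≤ 2 * C * Real.exp (M * B) := by linarith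
    calc |f (Pr r x) - f x| ^ p ≤ (2 * C * Real.exp (M * B)) ^ p :=
          Real.rpow_le_rpow (abs_nonneg _) h1 hp0.le
      _ = (2 * C) ^ p * Real.exp (M * B * p) := by
          rw [Real.mul_rpow (by linarith) (Real.exp_pos _).le, ← Real.exp_mul]
  -- measurable pieces
  have hn2 : Measurable fun ω => ‖X ω‖ ^ 2 := (hX.norm).pow_const 2
  set s : Set Ω := {ω | ‖X ω‖ ≤ R} with hsdef
  have hs : MeasurableSet s := measurableSet_le hX.norm measurable_const
  set A : ℕ → Set Ω :=
    fun k => {ω | R ^ 2 + (k : ℝ) < ‖X ω‖ ^ 2 ∧ ‖X ω‖ ^ 2 ≤ R ^ 2 + ((k : ℝ) + 1)}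
    with hAdef
  have hA : ∀ k, MeasurableSet (A k) := by
    intro k
    exact (measurableSet_lt measurable_const hn2).inter (measurableSet_le hn2 measurable_const)
  have hcover : sᶜ ⊆ ⋃ k, A k := by
    intro ω hω
    simp only [hsdef, Set.mem_compl_iff, Set.mem_setOf_eq, not_le] at hω
    have hu : 0 < ‖X ω‖ ^ 2 - R ^ 2 := by nlinarith [norm_nonneg (X ω)]
    set u : ℝ := ‖X ω‖ ^ 2 - R ^ 2 with hudef
    have hn1 : 1 ≤ ⌈u⌉₊ := Nat.ceil_pos.mpr hu
    have hcast : ((⌈u⌉₊ - 1 : ℕ) : ℝ) = (⌈u⌉₊ : ℝ) - 1 := by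
      push_cast [hn1]; ring
    refine Set.mem_iUnion.mpr ⟨⌈u⌉₊ - 1, ?_, ?_⟩
    · have := Nat.ceil_lt_add_one hu.le
      rw [hcast]; simp only [hudef] at this ⊢; linarith
    · have := Nat.le_ceil u
      rw [hcast]; simp only [hudef] at this ⊢; linarith
  -- decompose the integral
  set g : Ω → ENNReal := fun ω => ENNReal.ofReal (|f (Pr r (X ω)) - f (X ω)| ^ p) with hgdef
  have hzero : ∫⁻ ω in s, g ω ∂P = 0 := by
    have h0 : ∀ ω, ω ∈ s → g ω = 0 := by
      intro ω hω
      simp only [hsdef, Set.mem_setOf_eq] at hω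
      rw [hgdef]
      simp only
      rw [hPr2 r (X ω) hω, sub_self, abs_zero, Real.zero_rpow (ne_of_gt hp0),
        ENNReal.ofReal_zero]
    rw [setLIntegral_congr_fun hs (fun ω hω => h0 ω hω), lintegral_zero]
  -- per-annulus bound
  have hk : ∀ k : ℕ, ∫⁻ ω in A k, g ω ∂P ≤
      ENNReal.ofReal ((D * R ^ η * Real.exp (-γ * R ^ 2)) * (((k : ℝ) + 1) ^ m * q ^ k)) := by
    intro k
    set Rk : ℝ := Real.sqrt (R ^ 2 + (k : ℝ)) with hRkdef
    have hRk2 : Rk ^ 2 = R ^ 2 + (k : ℝ) := Real.sq_sqrt (by positivity)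
    have hRRk : R ≤ Rk := by
      have h2 : R ^ 2 ≤ R ^ 2 + (k : ℝ) := le_add_of_nonneg_right (Nat.cast_nonneg k)
      calc R = Real.sqrt (R ^ 2) := (Real.sqrt_sq hR0.le).symm
        _ ≤ Real.sqrt (R ^ 2 + (k : ℝ)) := Real.sqrt_le_sqrt h2
    have hRk0 : 0 < Rk := lt_of_lt_of_le hR0 hRRk
    have hsub : A k ⊆ {ω | ‖X ω‖ > Rk} := by
      intro ω hω
      simp only [hAdef, Set.mem_setOf_eq] at hω ⊢
      have h1 : Real.sqrt (R ^ 2 + (k : ℝ)) < Real.sqrt (‖X ω‖ ^ 2) :=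
        Real.sqrt_lt_sqrt (by positivity) hω.1
      rwa [Real.sqrt_sq (norm_nonneg _)] at h1
    have htailk := htail Rk (lt_of_lt_of_le hRt₀ hRRk)
    set ak : ℝ := (2 * C) ^ p * Real.exp (M * (R ^ 2 + ((k : ℝ) + 1)) * p) with hakdef
    have hak0 : 0 ≤ ak := by
      have : (0 : ℝ) < (2 * C) ^ p := Real.rpow_pos_of_pos (by linarith) p
      positivity
    have step1 : ∫⁻ ω in A k, g ω ∂P ≤ ENNReal.ofReal ak * P (A k) := by
      calc ∫⁻ ω in A k, g ω ∂P ≤ ∫⁻ _ in A k, ENNReal.ofReal ak ∂P := by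
            refine setLIntegral_mono' (hA k) fun ω hω => ?_
            simp only [hAdef, Set.mem_setOf_eq] at hω
            exact ENNReal.ofReal_le_ofReal (key (X ω) _ hω.2)
        _ = ENNReal.ofReal ak * P (A k) := setLIntegral_const _ _
    have step2 : P (A k) ≤ ENNReal.ofReal (C' * Rk ^ η * Real.exp (-α * Rk ^ 2)) :=
      (measure_mono hsub).trans htailk
    have step3 : ∫⁻ ω in A k, g ω ∂P ≤
        ENNReal.ofReal (ak * (C' * Rk ^ η * Real.exp (-α * Rk ^ 2))) := by
      rw [ENNReal.ofReal_mul hak0]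
      exact step1.trans (mul_le_mul_right step2 _)
    refine step3.trans (ENNReal.ofReal_le_ofReal ?_)
    -- now a real-number inequality
    have hRkη : Rk ^ η ≤ R ^ η * ((k : ℝ) + 1) ^ m := by
      rcases le_or_gt 0 η with hη | hη
      · have hk1 : (1 : ℝ) ≤ (k : ℝ) + 1 := by
          have := Nat.cast_nonneg (α := ℝ) k; linarith
        have h1 : Rk ≤ R * ((k : ℝ) + 1) := by
          have h2 : R ^ 2 + (k : ℝ) ≤ (R * ((k : ℝ) + 1)) ^ 2 := by
            have hR2 : 1 ≤ R ^ 2 := by nlinarith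
            have hk0 : (0 : ℝ) ≤ (k : ℝ) := Nat.cast_nonneg k
            nlinarith [mul_nonneg (sub_nonneg.mpr hR2) hk0,
              mul_nonneg (mul_nonneg (sq_nonneg R) hk0) hk0]
          calc Rk = Real.sqrt (R ^ 2 + (k : ℝ)) := hRkdef
            _ ≤ Real.sqrt ((R * ((k : ℝ) + 1)) ^ 2) := Real.sqrt_le_sqrt h2
            _ = R * ((k : ℝ) + 1) := Real.sqrt_sq (by positivity)
        calc Rk ^ η ≤ (R * ((k : ℝ) + 1)) ^ η :=
              Real.rpow_le_rpow (Real.sqrt_nonneg _) h1 hη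
          _ = R ^ η * ((k : ℝ) + 1) ^ η := Real.mul_rpow hR0.le (by linarith)
          _ ≤ R ^ η * ((k : ℝ) + 1) ^ (m : ℝ) := by
              refine mul_le_mul_of_nonneg_left ?_ (Real.rpow_nonneg hR0.le _)
              refine Real.rpow_le_rpow_of_exponent_le hk1 ?_
              exact le_trans (le_abs_self η) (Nat.le_ceil _)
          _ = R ^ η * ((k : ℝ) + 1) ^ m := by rw [Real.rpow_natCast]
      · have h1 : Rk ^ η ≤ R ^ η := Real.rpow_le_rpow_of_nonpos hR0 hRRk hη.le
        have h2 : (1 : ℝ) ≤ ((k : ℝ) + 1) ^ m := by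
          refine one_le_pow₀ ?_
          have := Nat.cast_nonneg (α := ℝ) k; linarith
        calc Rk ^ η ≤ R ^ η := h1
          _ ≤ R ^ η * ((k : ℝ) + 1) ^ m :=
            le_mul_of_one_le_right (Real.rpow_nonneg hR0.le _) h2
    have hqk : q ^ k = Real.exp ((k : ℝ) * (-γ)) := (Real.exp_nat_mul _ k).symm
    have hcomb : Real.exp (M * (R ^ 2 + ((k : ℝ) + 1)) * p) * Real.exp (-α * (R ^ 2 + (k : ℝ)))
        = Real.exp (p * M) * (Real.exp (-γ * R ^ 2) * Real.exp ((k : ℝ) * (-γ))) := by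
      rw [← Real.exp_add, ← Real.exp_add, ← Real.exp_add]
      congr 1
      simp only [hγdef]
      ring
    calc ak * (C' * Rk ^ η * Real.exp (-α * Rk ^ 2))
        = ((2 * C) ^ p * C' * (Real.exp (M * (R ^ 2 + ((k : ℝ) + 1)) * p) *
            Real.exp (-α * (R ^ 2 + (k : ℝ))))) * Rk ^ η := by
          rw [hakdef, hRk2]; ring
      _ = (D * Real.exp (-γ * R ^ 2) * q ^ k) * Rk ^ η := by
          rw [hcomb, hqk, hDdef]; ring
      _ ≤ (D * Real.exp (-γ * R ^ 2) * q ^ k) * (R ^ η * ((k : ℝ) + 1) ^ m) := by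
          refine mul_le_mul_of_nonneg_left hRkη ?_
          positivity
      _ = (D * R ^ η * Real.exp (-γ * R ^ 2)) * (((k : ℝ) + 1) ^ m * q ^ k) := by ring
  -- sum up
  have hc0 : 0 ≤ D * R ^ η * Real.exp (-γ * R ^ 2) := by positivity
  have hsum : ∫⁻ ω, g ω ∂P ≤
      ENNReal.ofReal ((D * R ^ η * Real.exp (-γ * R ^ 2)) * (S + 1)) := by
    rw [← lintegral_add_compl g hs, hzero, zero_add]
    calc ∫⁻ ω in sᶜ, g ω ∂P ≤ ∫⁻ ω in ⋃ k, A k, g ω ∂P := lintegral_mono_set hcover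
      _ ≤ ∑' k : ℕ, ∫⁻ ω in A k, g ω ∂P := lintegral_iUnion_le A g
      _ ≤ ∑' k : ℕ, ENNReal.ofReal ((D * R ^ η * Real.exp (-γ * R ^ 2)) *
            (((k : ℝ) + 1) ^ m * q ^ k)) := ENNReal.tsum_le_tsum hk
      _ = ∑' k : ℕ, ENNReal.ofReal (D * R ^ η * Real.exp (-γ * R ^ 2)) *
            ENNReal.ofReal (((k : ℝ) + 1) ^ m * q ^ k) := by
          congr 1; funext k; rw [← ENNReal.ofReal_mul hc0]
      _ = ENNReal.ofReal (D * R ^ η * Real.exp (-γ * R ^ 2)) *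
            ∑' k : ℕ, ENNReal.ofReal (((k : ℝ) + 1) ^ m * q ^ k) := ENNReal.tsum_mul_left
      _ = ENNReal.ofReal (D * R ^ η * Real.exp (-γ * R ^ 2)) * ENNReal.ofReal S := by
          rw [← ENNReal.ofReal_tsum_of_nonneg (fun k => by positivity) hSsum]
      _ = ENNReal.ofReal ((D * R ^ η * Real.exp (-γ * R ^ 2)) * S) := by
          rw [← ENNReal.ofReal_mul hc0]
      _ ≤ ENNReal.ofReal ((D * R ^ η * Real.exp (-γ * R ^ 2)) * (S + 1)) := by
          refine ENNReal.ofReal_le_ofReal ?_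
          refine mul_le_mul_of_nonneg_left (by linarith) hc0
  refine hsum.trans (le_of_eq ?_)
  congr 1
  have hRη : R ^ η = (1 - δ) ^ η * r ^ η := Real.mul_rpow h1δ.le hr0.le
  have hexp : -γ * R ^ 2 = -p * (α / p - M) * (1 - δ) ^ 2 * r ^ 2 := by
    have hpne : p ≠ 0 := ne_of_gt hp0
    rw [hγdef, hRdef]
    field_simp
  rw [hRη, hexp]
  ring
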